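/- Let (E, ℰ, ν) be a measure space, let γ₁ > 0, γ₂ > 0, and let u, w : E → ℝ be measurable functions such that x ↦ γ₁·h(w(x)/γ₁) and x ↦ γ₂·h((u(x)−w(x))/γ₂) are ν-integrable. Then x ↦ (γ₁+γ₂)·h(u(x)/(γ₁+γ₂)) is ν-integrable and ∫ (γ₁+γ₂)·h(u(x)/(γ₁+γ₂)) dν(x) ≤ ∫ γ₁·h(w(x)/γ₁) dν(x) + ∫ γ₂·h((u(x)−w(x))/γ₂) dν(x). Moreover, if w = (γ₁/(γ₁+γ₂))·u, then the two sides are equal. -/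

import Mathlib

open MeasureTheory

lemma h_nonneg (t : ℝ) : 0 ≤ Real.exp t - 1 - t := by
  have := Real.add_one_le_exp t; linarith

lemma h_conv (γ₁ γ₂ : ℝ) (hγ₁ : 0 < γ₁) (hγ₂ : 0 < γ₂) (a b : ℝ) :
    (γ₁ + γ₂) * (Real.exp ((γ₁ * a + γ₂ * b) / (γ₁ + γ₂)) - 1 - (γ₁ * a + γ₂ * b) / (γ₁ + γ₂))
      ≤ γ₁ * (Real.exp a - 1 - a) + γ₂ * (Real.exp b - 1 - b) := by
  have hs : 0 < γ₁ + γ₂ := by linarith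
  have key := convexOn_exp.2 (Set.mem_univ a) (Set.mem_univ b)
    (le_of_lt (div_pos hγ₁ hs)) (le_of_lt (div_pos hγ₂ hs)) (by field_simp)
  simp only [smul_eq_mul] at key
  have h1 : γ₁ / (γ₁ + γ₂) * a + γ₂ / (γ₁ + γ₂) * b = (γ₁ * a + γ₂ * b) / (γ₁ + γ₂) := by
    field_simp
  rw [h1] at key
  have key2 : (γ₁ + γ₂) * Real.exp ((γ₁ * a + γ₂ * b) / (γ₁ + γ₂))
      ≤ γ₁ * Real.exp a + γ₂ * Real.exp b := by
    have := mul_le_mul_of_nonneg_left key (le_of_lt hs)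
    calc (γ₁ + γ₂) * Real.exp ((γ₁ * a + γ₂ * b) / (γ₁ + γ₂)) ≤
        (γ₁ + γ₂) * (γ₁ / (γ₁ + γ₂) * Real.exp a + γ₂ / (γ₁ + γ₂) * Real.exp b) := this
      _ = γ₁ * Real.exp a + γ₂ * Real.exp b := by field_simp
  have h2 : (γ₁ + γ₂) * ((γ₁ * a + γ₂ * b) / (γ₁ + γ₂)) = γ₁ * a + γ₂ * b := by
    field_simp
  nlinarith [key2]

theorem entropic_jump_infconv
    {E : Type*} [MeasurableSpace E] (ν : Measure E)
    (γ₁ γ₂ : ℝ) (hγ₁ : 0 < γ₁) (hγ₂ : 0 < γ₂)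
    (u w : E → ℝ) (hu : Measurable u) (hw : Measurable w)
    (hint₁ : Integrable (fun x => γ₁ * (Real.exp (w x / γ₁) - 1 - w x / γ₁)) ν)
    (hint₂ : Integrable
      (fun x => γ₂ * (Real.exp ((u x - w x) / γ₂) - 1 - (u x - w x) / γ₂)) ν) :
    Integrable
        (fun x => (γ₁ + γ₂) * (Real.exp (u x / (γ₁ + γ₂)) - 1 - u x / (γ₁ + γ₂))) ν ∧
      (∫ x, (γ₁ + γ₂) * (Real.exp (u x / (γ₁ + γ₂)) - 1 - u x / (γ₁ + γ₂)) ∂ν) ≤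
        (∫ x, γ₁ * (Real.exp (w x / γ₁) - 1 - w x / γ₁) ∂ν) +
          ∫ x, γ₂ * (Real.exp ((u x - w x) / γ₂) - 1 - (u x - w x) / γ₂) ∂ν ∧
      ((w = fun x => (γ₁ / (γ₁ + γ₂)) * u x) →
        (∫ x, (γ₁ + γ₂) * (Real.exp (u x / (γ₁ + γ₂)) - 1 - u x / (γ₁ + γ₂)) ∂ν) =
          (∫ x, γ₁ * (Real.exp (w x / γ₁) - 1 - w x / γ₁) ∂ν) +
            ∫ x, γ₂ * (Real.exp ((u x - w x) / γ₂) - 1 - (u x - w x) / γ₂) ∂ν) := by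
  have hs : 0 < γ₁ + γ₂ := by linarith
  -- pointwise inequality
  have hpt : ∀ x, (γ₁ + γ₂) * (Real.exp (u x / (γ₁ + γ₂)) - 1 - u x / (γ₁ + γ₂)) ≤
      γ₁ * (Real.exp (w x / γ₁) - 1 - w x / γ₁) +
        γ₂ * (Real.exp ((u x - w x) / γ₂) - 1 - (u x - w x) / γ₂) := by
    intro x
    have key := h_conv γ₁ γ₂ hγ₁ hγ₂ (w x / γ₁) ((u x - w x) / γ₂)
    have h1 : γ₁ * (w x / γ₁) + γ₂ * ((u x - w x) / γ₂) = u x := by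
      field_simp; ring
    rw [h1] at key
    exact key
  have hnn : ∀ x, 0 ≤ (γ₁ + γ₂) * (Real.exp (u x / (γ₁ + γ₂)) - 1 - u x / (γ₁ + γ₂)) :=
    fun x => mul_nonneg hs.le (h_nonneg _)
  have hmeas : AEStronglyMeasurable
      (fun x => (γ₁ + γ₂) * (Real.exp (u x / (γ₁ + γ₂)) - 1 - u x / (γ₁ + γ₂))) ν := by
    apply Measurable.aestronglyMeasurable
    fun_prop
  have hintsum := hint₁.add hint₂
  have hint : Integrable
      (fun x => (γ₁ + γ₂) * (Real.exp (u x / (γ₁ + γ₂)) - 1 - u x / (γ₁ + γ₂))) ν := by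
    refine hintsum.mono' hmeas ?_
    filter_upwards with x
    rw [Real.norm_eq_abs, abs_of_nonneg (hnn x)]
    exact hpt x
  refine ⟨hint, ?_, ?_⟩
  · rw [← integral_add hint₁ hint₂]
    exact integral_mono hint hintsum hpt
  · intro hweq
    subst hweq
    have e1 : ∀ x, (γ₁ / (γ₁ + γ₂) * u x) / γ₁ = u x / (γ₁ + γ₂) := by
      intro x; field_simp
    have e2 : ∀ x, (u x - γ₁ / (γ₁ + γ₂) * u x) / γ₂ = u x / (γ₁ + γ₂) := by
      intro x; field_simp; ring
    simp only [e1, e2]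
    rw [← integral_add]
    · congr 1; ext x; ring
    · have := hint₁; simpa only [e1] using this
    · have := hint₂; simpa only [e2] using this
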